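/- Let T be an isometry on a Hilbert space H with ⋂_{n≥0} Tⁿ(H) = {0} and with dim ker T* = m finite. Let M be a nonzero closed nearly T⁻¹ invariant subspace of H. Then the subspace M ⊖ (M ∩ T(H)) is nonzero and finite-dimensional, and 1 ≤ dim(M ⊖ (M ∩ T(H))) ≤ m. -/

import Mathlib

/-- If `T` is a pure isometry (⋂ Tⁿ(H) = {0}) with `dim ker T* = m` finite and
`M` is a nonzero closed nearly `T⁻¹` invariant subspace, then `M ⊖ (M ∩ T(H))` is nonzero,
finite-dimensional, and `1 ≤ dim (M ⊖ (M ∩ T(H))) ≤ m`. -/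
theorem dim_wandering_subspace_le_multiplicity
    {H : Type*} [NormedAddCommGroup H] [InnerProductSpace ℂ H] [CompleteSpace H]
    (T : H →L[ℂ] H)
    -- `T` is an isometry with `⋂_{n≥0} Tⁿ(H) = {0}`
    (hiso : Isometry T)
    (hpure : (⨅ n : ℕ, LinearMap.range ((T ^ n : H →L[ℂ] H) : H →ₗ[ℂ] H)) = ⊥)
    -- `dim ker T* = m` is finite
    (m : ℕ)
    [FiniteDimensional ℂ (LinearMap.ker ((ContinuousLinearMap.adjoint T : H →L[ℂ] H) : H →ₗ[ℂ] H))]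
    (hm : Module.finrank ℂ (LinearMap.ker ((ContinuousLinearMap.adjoint T : H →L[ℂ] H) : H →ₗ[ℂ] H)) = m)
    -- `M` is a nonzero closed nearly `T⁻¹` invariant subspace of `H`
    (M : Submodule ℂ H) (hMclosed : IsClosed (M : Set H)) (hMne : M ≠ ⊥)
    (hnear : ∀ g : H, T g ∈ M → g ∈ M) :
    M ⊓ (M ⊓ LinearMap.range (T : H →ₗ[ℂ] H))ᗮ ≠ ⊥ ∧
    FiniteDimensional ℂ (M ⊓ (M ⊓ LinearMap.range (T : H →ₗ[ℂ] H))ᗮ : Submodule ℂ H) ∧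
    1 ≤ Module.finrank ℂ (M ⊓ (M ⊓ LinearMap.range (T : H →ₗ[ℂ] H))ᗮ : Submodule ℂ H) ∧
    Module.finrank ℂ (M ⊓ (M ⊓ LinearMap.range (T : H →ₗ[ℂ] H))ᗮ : Submodule ℂ H) ≤ m := by
  set R : Submodule ℂ H := LinearMap.range (T : H →ₗ[ℂ] H) with hRdef
  set W : Submodule ℂ H := M ⊓ (M ⊓ R)ᗮ with hWdef
  set K : Submodule ℂ H := LinearMap.ker ((ContinuousLinearMap.adjoint T : H →L[ℂ] H) : H →ₗ[ℂ] H) with hKdef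
  -- R is closed
  have hRclosed : IsClosed (R : Set H) := by
    have hset : (R : Set H) = Set.range T := by
      ext x
      simp [hRdef, LinearMap.mem_range, Set.mem_range]
    rw [hset]
    exact hiso.antilipschitz.isClosed_range T.uniformContinuous
  haveI : CompleteSpace R := hRclosed.completeSpace_coe
  -- ker T* = Rᗮ
  have hker : K = Rᗮ := by
    ext f
    simp only [hKdef, LinearMap.mem_ker, Submodule.mem_orthogonal]
    constructor
    · intro h u hu
      obtain ⟨g, rfl⟩ := hu
      calc (inner ℂ (T g) f : ℂ) = inner ℂ g (ContinuousLinearMap.adjoint T f) :=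
            (ContinuousLinearMap.adjoint_inner_right T g f).symm
        _ = 0 := by rw [show (ContinuousLinearMap.adjoint T) f = 0 from h, inner_zero_right]
    · intro h
      rw [← inner_self_eq_zero (𝕜 := ℂ)]
      calc (inner ℂ (ContinuousLinearMap.adjoint T f) (ContinuousLinearMap.adjoint T f) : ℂ)
          = inner ℂ f (T (ContinuousLinearMap.adjoint T f)) :=
            ContinuousLinearMap.adjoint_inner_left T _ f
        _ = 0 := by
            rw [← inner_conj_symm, h (T (ContinuousLinearMap.adjoint T f)) ⟨_, rfl⟩, map_zero]
  have hKperp : Kᗮ = R := by rw [hker, Submodule.orthogonal_orthogonal]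
  -- injection from W into K
  haveI : CompleteSpace K := FiniteDimensional.complete ℂ K
  let φ : W →ₗ[ℂ] K :=
    ((Submodule.orthogonalProjectionOnto K : H →L[ℂ] K) : H →ₗ[ℂ] K).comp W.subtype
  have hφinj : Function.Injective φ := by
    rw [← LinearMap.ker_eq_bot, LinearMap.ker_eq_bot']
    rintro ⟨f, hf⟩ hf0
    have hproj : Submodule.orthogonalProjectionOnto K f = 0 := hf0
    have hfK : f ∈ Kᗮ := by
      have : f - (Submodule.orthogonalProjectionOnto K f : H) ∈ Kᗮ :=
        Submodule.sub_starProjection_mem_orthogonal (K := K) f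
      rwa [hproj, Submodule.coe_zero, sub_zero] at this
    rw [hKperp] at hfK
    obtain ⟨g, hg⟩ := hfK
    have hfM : f ∈ M := hf.1
    have hgM : g ∈ M := hnear g (hg ▸ hfM)
    have hfMR : f ∈ M ⊓ R := ⟨hfM, ⟨g, hg⟩⟩
    have : f = 0 := by
      have := hf.2 f hfMR
      rwa [inner_self_eq_zero] at this
    exact Subtype.ext this
  haveI hWfin : FiniteDimensional ℂ W := FiniteDimensional.of_injective φ hφinj
  have hle : Module.finrank ℂ W ≤ m := by
    rw [← hm]
    exact LinearMap.finrank_le_finrank_of_injective hφinj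
  -- W ≠ ⊥
  have hWne : W ≠ ⊥ := by
    intro hWbot
    have hMR : M ≤ R := by
      intro f hf
      have hNclosed : IsClosed ((M ⊓ R : Submodule ℂ H) : Set H) := by
        have : ((M ⊓ R : Submodule ℂ H) : Set H) = (M : Set H) ∩ (R : Set H) := rfl
        rw [this]; exact hMclosed.inter hRclosed
      haveI : CompleteSpace (M ⊓ R : Submodule ℂ H) := hNclosed.completeSpace_coe
      set p : H := (Submodule.orthogonalProjectionOnto (M ⊓ R) f : H) with hp
      have hpmem : p ∈ M ⊓ R := (Submodule.orthogonalProjectionOnto (M ⊓ R) f).2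
      have hsub : f - p ∈ (M ⊓ R)ᗮ := Submodule.sub_starProjection_mem_orthogonal f
      have hsubM : f - p ∈ M := M.sub_mem hf hpmem.1
      have hsubW : f - p ∈ W := ⟨hsubM, hsub⟩
      rw [hWbot, Submodule.mem_bot, sub_eq_zero] at hsubW
      rw [hsubW]
      exact hpmem.2
    have hMn : ∀ n : ℕ, M ≤ LinearMap.range ((T ^ n : H →L[ℂ] H) : H →ₗ[ℂ] H) := by
      intro n
      induction n with
      | zero => intro f _; exact ⟨f, by simp⟩
      | succ n ih =>
        intro f hf
        obtain ⟨g, hg⟩ := hMR hf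
        have hgM : g ∈ M := hnear g (hg ▸ hf)
        obtain ⟨h, hh⟩ := ih hgM
        refine ⟨h, ?_⟩
        rw [pow_succ']
        simp only [ContinuousLinearMap.coe_coe, ContinuousLinearMap.mul_apply] at hh ⊢
        rw [hh]; exact hg
    have : M ≤ ⊥ := by
      rw [← hpure]
      exact le_iInf hMn
    exact hMne (le_bot_iff.mp this)
  -- conclude
  haveI : Nontrivial W := Submodule.nontrivial_iff_ne_bot.mpr hWne
  refine ⟨hWne, hWfin, ?_, hle⟩
  exact Module.finrank_pos
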